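/- Under the hypotheses of the previous convexity estimate, if additionally λ is small enough that λ²(|A|/C + 2BM/C) < 1/C_P(Ω), where C_P(Ω) is the Poincaré constant of Ω (i.e. ∫|h|² ≤ C_P ∫|∇h|² for all h ∈ H₀¹), then E is strictly convex on X = {Q ∈ H₀¹(Ω;S₀) : ‖Q‖_{L∞} ≤ M}, and consequently E has at most one critical point in X. -/

import Mathlib

open MeasureTheory

/-- The reduced LdG bulk density `F̄_b(Q) = (A/2C)tr Q² − (B/3C)tr Q³ + (1/4)(tr Q²)²`. -/
noncomputable def Fbred (A B C : ℝ) (Q : Matrix (Fin 3) (Fin 3) ℝ) : ℝ :=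
  A / (2 * C) * (Q * Q).trace - B / (3 * C) * (Q * Q * Q).trace
    + (1 / 4) * (Q * Q).trace ^ 2

/-- `|∇Q|² = Σ_{k,i,j} |∂_k Q^{ij}|²`. -/
noncomputable def gradsq (Qf : (Fin 3 → ℝ) → Matrix (Fin 3) (Fin 3) ℝ)
    (x : Fin 3 → ℝ) : ℝ :=
  ∑ k : Fin 3, ∑ i : Fin 3, ∑ j : Fin 3,
    (fderiv ℝ (fun y => Qf y i j) x (Pi.single k 1)) ^ 2

/-- The energy `E[Q] = ∫_Ω [½|∇Q|² + λ² F̄_b(Q)] dx`. -/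
noncomputable def Eldg (Ω : Set (Fin 3 → ℝ)) (lam A B C : ℝ)
    (Qf : (Fin 3 → ℝ) → Matrix (Fin 3) (Fin 3) ℝ) : ℝ :=
  ∫ x in Ω, ((1 / 2) * gradsq Qf x + lam ^ 2 * Fbred A B C (Qf x))

/-- `Qf` is a critical point of `E` on `Ω`: the Gateaux derivative vanishes in all
admissible directions. -/
def IsCritical (𝒜 : Set ((Fin 3 → ℝ) → Matrix (Fin 3) (Fin 3) ℝ))
    (Ω : Set (Fin 3 → ℝ)) (lam A B C : ℝ)
    (Qf : (Fin 3 → ℝ) → Matrix (Fin 3) (Fin 3) ℝ) : Prop :=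
  ∀ hf ∈ 𝒜, HasDerivAt (fun t : ℝ => Eldg Ω lam A B C (fun x => Qf x + t • hf x)) 0 0

/-! ### Auxiliary algebraic lemmas -/

lemma tr2_expand (t : ℝ) (Q h : Matrix (Fin 3) (Fin 3) ℝ) :
    ((Q + t • h) * (Q + t • h)).trace
      = (Q * Q).trace + 2 * t * (Q * h).trace + t ^ 2 * (h * h).trace := by
  simp only [add_mul, mul_add, smul_mul_assoc, Matrix.mul_smul, Matrix.trace_add,
    Matrix.trace_smul, smul_smul, smul_eq_mul]
  rw [Matrix.trace_mul_comm h Q]; ring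

lemma tr3_expand (t : ℝ) (Q h : Matrix (Fin 3) (Fin 3) ℝ) :
    ((Q + t • h) * (Q + t • h) * (Q + t • h)).trace
      = (Q * Q * Q).trace + 3 * t * (Q * Q * h).trace
        + 3 * t ^ 2 * (Q * (h * h)).trace + t ^ 3 * (h * h * h).trace := by
  simp only [add_mul, mul_add, smul_mul_assoc, Matrix.mul_smul, Matrix.trace_add,
    Matrix.trace_smul, smul_smul, smul_eq_mul, ← mul_assoc]
  rw [Matrix.trace_mul_comm (Q * h) Q, Matrix.trace_mul_comm (h * h) Q,
    Matrix.trace_mul_comm (h * Q) h]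
  simp only [← mul_assoc]
  rw [Matrix.trace_mul_comm (h * h) Q]
  simp only [← mul_assoc]
  rw [mul_assoc h Q Q, Matrix.trace_mul_comm h (Q * Q)]
  ring

/-- Quartic expansion of the bulk density along a line. -/
lemma Fbred_expand (A B C t : ℝ) (Q h : Matrix (Fin 3) (Fin 3) ℝ) :
    Fbred A B C (Q + t • h)
      = Fbred A B C Q
        + t * (A / C * (Q * h).trace - B / C * (Q * Q * h).trace
            + (Q * Q).trace * (Q * h).trace)
        + t ^ 2 * (A / (2 * C) * (h * h).trace - B / C * (Q * (h * h)).trace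
            + (Q * h).trace ^ 2 + (Q * Q).trace * (h * h).trace / 2)
        + t ^ 3 * (-(B / (3 * C)) * (h * h * h).trace + (Q * h).trace * (h * h).trace)
        + t ^ 4 * ((1 / 4) * (h * h).trace ^ 2) := by
  simp only [Fbred, tr2_expand, tr3_expand]
  field_simp
  ring

lemma trace_mul_symm_eq_sum (a b : Matrix (Fin 3) (Fin 3) ℝ) (hb : b.IsSymm) :
    (a * b).trace = ∑ i, ∑ j, a i j * b i j := by
  simp only [Matrix.trace, Matrix.diag, Matrix.mul_apply]
  exact Finset.sum_congr rfl fun i _ => Finset.sum_congr rfl fun j _ => by rw [hb.apply i j]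

lemma trace_sq_eq_sum (h : Matrix (Fin 3) (Fin 3) ℝ) (hh : h.IsSymm) :
    (h * h).trace = ∑ i, ∑ j, (h i j) ^ 2 := by
  rw [trace_mul_symm_eq_sum h h hh]
  exact Finset.sum_congr rfl fun i _ => Finset.sum_congr rfl fun j _ => (sq (h i j)).symm

lemma trace_sq_nonneg (h : Matrix (Fin 3) (Fin 3) ℝ) (hh : h.IsSymm) :
    0 ≤ (h * h).trace := by
  rw [trace_sq_eq_sum h hh]
  exact Finset.sum_nonneg fun i _ => Finset.sum_nonneg fun j _ => sq_nonneg _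

lemma mul_self_isSymm (h : Matrix (Fin 3) (Fin 3) ℝ) (hh : h.IsSymm) : (h * h).IsSymm := by
  unfold Matrix.IsSymm
  rw [Matrix.transpose_mul, hh.eq]

lemma trace_CS (a b : Matrix (Fin 3) (Fin 3) ℝ) (ha : a.IsSymm) (hb : b.IsSymm) :
    ((a * b).trace) ^ 2 ≤ (a * a).trace * (b * b).trace := by
  rw [trace_mul_symm_eq_sum a b hb, trace_sq_eq_sum a ha, trace_sq_eq_sum b hb]
  rw [← Fintype.sum_prod_type (f := fun p : Fin 3 × Fin 3 => a p.1 p.2 * b p.1 p.2),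
    ← Fintype.sum_prod_type (f := fun p : Fin 3 × Fin 3 => (a p.1 p.2) ^ 2),
    ← Fintype.sum_prod_type (f := fun p : Fin 3 × Fin 3 => (b p.1 p.2) ^ 2)]
  exact Finset.sum_mul_sq_le_sq_mul_sq _ _ _

lemma sum_sq_mul_self_le (h : Matrix (Fin 3) (Fin 3) ℝ) (hh : h.IsSymm) :
    ((h * h) * (h * h)).trace ≤ ((h * h).trace) ^ 2 := by
  rw [trace_sq_eq_sum _ (mul_self_isSymm h hh), trace_sq_eq_sum h hh]
  have key : ∀ i j : Fin 3, ((h * h) i j) ^ 2 ≤ (∑ k, (h i k) ^ 2) * (∑ k, (h k j) ^ 2) := by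
    intro i j
    rw [show (h * h) i j = ∑ k, h i k * h k j from Matrix.mul_apply]
    exact Finset.sum_mul_sq_le_sq_mul_sq _ _ _
  calc ∑ i, ∑ j, ((h * h) i j) ^ 2
      ≤ ∑ i, ∑ j, (∑ k, (h i k) ^ 2) * (∑ k, (h k j) ^ 2) :=
        Finset.sum_le_sum fun i _ => Finset.sum_le_sum fun j _ => key i j
    _ = (∑ i, ∑ k, (h i k) ^ 2) * (∑ j, ∑ k, (h k j) ^ 2) := by
        rw [Finset.sum_mul_sum]
    _ = (∑ i, ∑ j, (h i j) ^ 2) ^ 2 := by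
        rw [sq]
        congr 1
        rw [Finset.sum_comm]

lemma trace_Qhh_le (Q h : Matrix (Fin 3) (Fin 3) ℝ) (hQs : Q.IsSymm) (hhs : h.IsSymm)
    (M : ℝ) (hM : 0 ≤ M) (hQM : Real.sqrt ((Q * Q).trace) ≤ M) :
    (Q * (h * h)).trace ≤ M * (h * h).trace := by
  have hp : 0 ≤ (Q * Q).trace := trace_sq_nonneg Q hQs
  have hr : 0 ≤ (h * h).trace := trace_sq_nonneg h hhs
  have hpM : (Q * Q).trace ≤ M ^ 2 := by
    have := Real.sq_sqrt hp
    nlinarith [Real.sqrt_nonneg ((Q * Q).trace)]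
  have h1 : ((Q * (h * h)).trace) ^ 2 ≤ (Q * Q).trace * ((h * h) * (h * h)).trace :=
    trace_CS Q (h * h) hQs (mul_self_isSymm h hhs)
  have h2 : ((h * h) * (h * h)).trace ≤ ((h * h).trace) ^ 2 := sum_sq_mul_self_le h hhs
  nlinarith [mul_nonneg hM hr, sq_nonneg ((Q * (h * h)).trace - M * (h * h).trace),
    sq_nonneg ((Q * (h * h)).trace + M * (h * h).trace)]

/-- Pointwise lower bound for the second difference of the bulk density. -/
lemma deltaF_lb (A B C M : ℝ) (hC : 0 < C) (hB : 0 < B) (hM : 0 < M)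
    (Q h : Matrix (Fin 3) (Fin 3) ℝ) (hQs : Q.IsSymm) (hhs : h.IsSymm)
    (hQM : Real.sqrt ((Q * Q).trace) ≤ M) :
    -((|A| / C + 2 * B * M / C) * (h * h).trace)
      ≤ 2 * (A / (2 * C) * (h * h).trace - B / C * (Q * (h * h)).trace
            + (Q * h).trace ^ 2 + (Q * Q).trace * (h * h).trace / 2)
        + 2 * ((1 / 4) * (h * h).trace ^ 2) := by
  have hp : 0 ≤ (Q * Q).trace := trace_sq_nonneg Q hQs
  have hr : 0 ≤ (h * h).trace := trace_sq_nonneg h hhs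
  have hv : (Q * (h * h)).trace ≤ M * (h * h).trace :=
    trace_Qhh_le Q h hQs hhs M hM.le hQM
  have hA : -|A| ≤ A := neg_abs_le A
  have hCi : 0 < 1 / C := by positivity
  have e1 : 0 ≤ (A + |A|) * (1 / C) * (h * h).trace := by
    have : 0 ≤ A + |A| := by linarith
    positivity
  have e2 : 0 ≤ 2 * B * (1 / C) * (M * (h * h).trace - (Q * (h * h)).trace) := by
    have : 0 ≤ M * (h * h).trace - (Q * (h * h)).trace := by linarith
    positivity
  have e3 : 0 ≤ (Q * Q).trace * (h * h).trace := mul_nonneg hp hr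
  have hfs : A / (2 * C) = A * (1 / C) / 2 := by
    rw [mul_one_div, div_div, mul_comm C 2]
  have hfs2 : B / C = B * (1 / C) := (mul_one_div B C).symm
  have hfs3 : |A| / C = |A| * (1 / C) := (mul_one_div _ C).symm
  have hfs4 : 2 * B * M / C = 2 * B * (1 / C) * M := by rw [mul_one_div]; ring
  rw [hfs, hfs2, hfs3, hfs4]
  nlinarith [sq_nonneg (Q * h).trace, sq_nonneg (h * h).trace]

/-- Frobenius-norm bound for midpoints. -/
lemma midpoint_bound (a b : Matrix (Fin 3) (Fin 3) ℝ) (ha : a.IsSymm) (hb : b.IsSymm)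
    (M : ℝ) (hM : 0 ≤ M) (haM : Real.sqrt ((a * a).trace) ≤ M)
    (hbM : Real.sqrt ((b * b).trace) ≤ M) :
    Real.sqrt ((((1 / 2 : ℝ) • (a + b)) * ((1 / 2 : ℝ) • (a + b))).trace) ≤ M := by
  have hp : 0 ≤ (a * a).trace := trace_sq_nonneg a ha
  have hq : 0 ≤ (b * b).trace := trace_sq_nonneg b hb
  have hpM : (a * a).trace ≤ M ^ 2 := by
    nlinarith [Real.sq_sqrt hp, Real.sqrt_nonneg ((a * a).trace)]
  have hqM : (b * b).trace ≤ M ^ 2 := by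
    nlinarith [Real.sq_sqrt hq, Real.sqrt_nonneg ((b * b).trace)]
  have hcs : ((a * b).trace) ^ 2 ≤ (a * a).trace * (b * b).trace := trace_CS a b ha hb
  have hab : (a * b).trace ≤ M ^ 2 := by
    nlinarith [sq_nonneg ((a * b).trace - M ^ 2), sq_nonneg M]
  have hexp : ((((1 / 2 : ℝ) • (a + b)) * ((1 / 2 : ℝ) • (a + b))).trace)
      = (1 / 4) * ((a * a).trace + 2 * (a * b).trace + (b * b).trace) := by
    simp only [smul_mul_assoc, Matrix.mul_smul, add_mul, mul_add, Matrix.trace_smul,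
      Matrix.trace_add, smul_eq_mul, Matrix.trace_mul_comm b a]
    ring
  rw [hexp]
  calc Real.sqrt ((1 / 4) * ((a * a).trace + 2 * (a * b).trace + (b * b).trace))
      ≤ Real.sqrt (M ^ 2) := Real.sqrt_le_sqrt (by linarith)
    _ = M := Real.sqrt_sq hM

/-! ### Analytic lemmas -/

noncomputable def gmix (Qf hf : (Fin 3 → ℝ) → Matrix (Fin 3) (Fin 3) ℝ)
    (x : Fin 3 → ℝ) : ℝ :=
  ∑ k : Fin 3, ∑ i : Fin 3, ∑ j : Fin 3,
    (fderiv ℝ (fun y => Qf y i j) x (Pi.single k 1)) *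
      (fderiv ℝ (fun y => hf y i j) x (Pi.single k 1))

lemma gradsq_expand (Qf hf : (Fin 3 → ℝ) → Matrix (Fin 3) (Fin 3) ℝ)
    (hQ : ∀ i j, ContDiff ℝ 1 fun y => Qf y i j)
    (hh : ∀ i j, ContDiff ℝ 1 fun y => hf y i j) (t : ℝ) (x : Fin 3 → ℝ) :
    gradsq (fun y => Qf y + t • hf y) x
      = gradsq Qf x + 2 * t * gmix Qf hf x + t ^ 2 * gradsq hf x := by
  have key : ∀ k i j : Fin 3,
      (fderiv ℝ (fun y => (Qf y + t • hf y) i j) x (Pi.single k 1)) ^ 2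
        = (fderiv ℝ (fun y => Qf y i j) x (Pi.single k 1)) ^ 2
          + 2 * t * ((fderiv ℝ (fun y => Qf y i j) x (Pi.single k 1)) *
              (fderiv ℝ (fun y => hf y i j) x (Pi.single k 1)))
          + t ^ 2 * (fderiv ℝ (fun y => hf y i j) x (Pi.single k 1)) ^ 2 := by
    intro k i j
    have h1 : (fun y => (Qf y + t • hf y) i j) = fun y => Qf y i j + t * hf y i j := rfl
    have hd1 : DifferentiableAt ℝ (fun y => Qf y i j) x :=
      ((hQ i j).differentiable one_ne_zero).differentiableAt
    have hd2 : DifferentiableAt ℝ (fun y => hf y i j) x :=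
      ((hh i j).differentiable one_ne_zero).differentiableAt
    rw [h1, fderiv_fun_add hd1 (hd2.const_mul t), fderiv_const_mul hd2 t]
    simp only [ContinuousLinearMap.add_apply, ContinuousLinearMap.coe_smul',
      Pi.smul_apply, smul_eq_mul]
    ring
  simp only [gradsq, gmix, key, Finset.sum_add_distrib, Finset.mul_sum]

lemma cont_entry_mul (f g : (Fin 3 → ℝ) → Matrix (Fin 3) (Fin 3) ℝ)
    (hf : ∀ i j, Continuous fun x => f x i j) (hg : ∀ i j, Continuous fun x => g x i j)
    (i j : Fin 3) : Continuous fun x => (f x * g x) i j := by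
  simp only [Matrix.mul_apply]
  exact continuous_finset_sum _ fun k _ => (hf i k).mul (hg k j)

lemma cont_trace_mul (f g : (Fin 3 → ℝ) → Matrix (Fin 3) (Fin 3) ℝ)
    (hf : ∀ i j, Continuous fun x => f x i j) (hg : ∀ i j, Continuous fun x => g x i j) :
    Continuous fun x => (f x * g x).trace := by
  simp only [Matrix.trace, Matrix.diag, Matrix.mul_apply]
  exact continuous_finset_sum _ fun i _ => continuous_finset_sum _ fun k _ =>
    (hf i k).mul (hg k i)

lemma cont_fderiv_entry (f : (Fin 3 → ℝ) → Matrix (Fin 3) (Fin 3) ℝ)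
    (hf : ∀ i j, ContDiff ℝ 1 fun y => f y i j) (k i j : Fin 3) :
    Continuous fun x => fderiv ℝ (fun y => f y i j) x (Pi.single k 1) := by
  have h1 : Continuous (fderiv ℝ fun y => f y i j) := (hf i j).continuous_fderiv one_ne_zero
  exact (ContinuousLinearMap.apply ℝ ℝ (Pi.single k 1 : Fin 3 → ℝ)).continuous.comp h1

lemma cont_gradsq (f : (Fin 3 → ℝ) → Matrix (Fin 3) (Fin 3) ℝ)
    (hf : ∀ i j, ContDiff ℝ 1 fun y => f y i j) : Continuous (gradsq f) := by
  unfold gradsq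
  exact continuous_finset_sum _ fun k _ => continuous_finset_sum _ fun i _ =>
    continuous_finset_sum _ fun j _ => (cont_fderiv_entry f hf k i j).pow 2

lemma cont_gmix (f g : (Fin 3 → ℝ) → Matrix (Fin 3) (Fin 3) ℝ)
    (hf : ∀ i j, ContDiff ℝ 1 fun y => f y i j)
    (hg : ∀ i j, ContDiff ℝ 1 fun y => g y i j) : Continuous (gmix f g) := by
  unfold gmix
  exact continuous_finset_sum _ fun k _ => continuous_finset_sum _ fun i _ =>
    continuous_finset_sum _ fun j _ =>
      (cont_fderiv_entry f hf k i j).mul (cont_fderiv_entry g hg k i j)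

lemma integ_cont (Ω : Set (Fin 3 → ℝ)) (hΩb : Bornology.IsBounded Ω)
    (f : (Fin 3 → ℝ) → ℝ) (hf : Continuous f) : IntegrableOn f Ω volume :=
  (hf.continuousOn.integrableOn_compact hΩb.isCompact_closure).mono_set subset_closure

/-- Expansion of the energy along a line, with explicit quadratic and quartic coefficients. -/
lemma Eldg_expand (Ω : Set (Fin 3 → ℝ)) (hΩm : MeasurableSet Ω)
    (hΩb : Bornology.IsBounded Ω) (lam A B C : ℝ)
    (Qf hf : (Fin 3 → ℝ) → Matrix (Fin 3) (Fin 3) ℝ)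
    (hQ : ∀ i j, ContDiff ℝ 1 fun y => Qf y i j)
    (hh : ∀ i j, ContDiff ℝ 1 fun y => hf y i j) :
    ∃ e1 e3 : ℝ, ∀ t : ℝ,
      Eldg Ω lam A B C (fun x => Qf x + t • hf x)
        = Eldg Ω lam A B C Qf + t * e1
          + t ^ 2 * (∫ x in Ω, ((1 / 2) * gradsq hf x + lam ^ 2 *
              (A / (2 * C) * (hf x * hf x).trace - B / C * (Qf x * (hf x * hf x)).trace
                + (Qf x * hf x).trace ^ 2
                + (Qf x * Qf x).trace * (hf x * hf x).trace / 2)))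
          + t ^ 3 * e3
          + t ^ 4 * (∫ x in Ω, lam ^ 2 * ((1 / 4) * (hf x * hf x).trace ^ 2)) := by
  have cQ : ∀ i j, Continuous fun x => Qf x i j := fun i j => (hQ i j).continuous
  have ch : ∀ i j, Continuous fun x => hf x i j := fun i j => (hh i j).continuous
  have cQQ : Continuous fun x => (Qf x * Qf x).trace := cont_trace_mul Qf Qf cQ cQ
  have cQh : Continuous fun x => (Qf x * hf x).trace := cont_trace_mul Qf hf cQ ch
  have chh : Continuous fun x => (hf x * hf x).trace := cont_trace_mul hf hf ch ch
  have cQQQ : Continuous fun x => (Qf x * Qf x * Qf x).trace :=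
    cont_trace_mul (fun x => Qf x * Qf x) Qf (cont_entry_mul Qf Qf cQ cQ) cQ
  have cQQh : Continuous fun x => (Qf x * Qf x * hf x).trace :=
    cont_trace_mul (fun x => Qf x * Qf x) hf (cont_entry_mul Qf Qf cQ cQ) ch
  have cQhh : Continuous fun x => (Qf x * (hf x * hf x)).trace :=
    cont_trace_mul Qf (fun x => hf x * hf x) cQ (cont_entry_mul hf hf ch ch)
  have chhh : Continuous fun x => (hf x * hf x * hf x).trace :=
    cont_trace_mul (fun x => hf x * hf x) hf (cont_entry_mul hf hf ch ch) ch
  have cg0 : Continuous fun x => (1 / 2) * gradsq Qf x + lam ^ 2 * Fbred A B C (Qf x) := by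
    unfold Fbred
    exact (continuous_const.mul (cont_gradsq Qf hQ)).add (continuous_const.mul
      (((continuous_const.mul cQQ).sub (continuous_const.mul cQQQ)).add
        (continuous_const.mul (cQQ.pow 2))))
  have cg1 : Continuous fun x => gmix Qf hf x + lam ^ 2 *
      (A / C * (Qf x * hf x).trace - B / C * (Qf x * Qf x * hf x).trace
        + (Qf x * Qf x).trace * (Qf x * hf x).trace) :=
    (cont_gmix Qf hf hQ hh).add (continuous_const.mul
      (((continuous_const.mul cQh).sub (continuous_const.mul cQQh)).add (cQQ.mul cQh)))
  have cg2 : Continuous fun x => (1 / 2) * gradsq hf x + lam ^ 2 *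
      (A / (2 * C) * (hf x * hf x).trace - B / C * (Qf x * (hf x * hf x)).trace
        + (Qf x * hf x).trace ^ 2 + (Qf x * Qf x).trace * (hf x * hf x).trace / 2) :=
    (continuous_const.mul (cont_gradsq hf hh)).add (continuous_const.mul
      ((((continuous_const.mul chh).sub (continuous_const.mul cQhh)).add
        (cQh.pow 2)).add ((cQQ.mul chh).div_const 2)))
  have cg3 : Continuous fun x => lam ^ 2 *
      (-(B / (3 * C)) * (hf x * hf x * hf x).trace
        + (Qf x * hf x).trace * (hf x * hf x).trace) :=
    continuous_const.mul ((continuous_const.mul chhh).add (cQh.mul chh))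
  have cg4 : Continuous fun x => lam ^ 2 * ((1 / 4) * (hf x * hf x).trace ^ 2) :=
    continuous_const.mul (continuous_const.mul (chh.pow 2))
  have I0 := integ_cont Ω hΩb _ cg0
  have I1 := integ_cont Ω hΩb _ cg1
  have I2 := integ_cont Ω hΩb _ cg2
  have I3 := integ_cont Ω hΩb _ cg3
  have I4 := integ_cont Ω hΩb _ cg4
  refine ⟨∫ x in Ω, (gmix Qf hf x + lam ^ 2 *
      (A / C * (Qf x * hf x).trace - B / C * (Qf x * Qf x * hf x).trace
        + (Qf x * Qf x).trace * (Qf x * hf x).trace)),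
    ∫ x in Ω, lam ^ 2 * (-(B / (3 * C)) * (hf x * hf x * hf x).trace
        + (Qf x * hf x).trace * (hf x * hf x).trace), fun t => ?_⟩
  have hpt : ∀ x : Fin 3 → ℝ,
      (1 / 2) * gradsq (fun y => Qf y + t • hf y) x
          + lam ^ 2 * Fbred A B C (Qf x + t • hf x)
        = ((1 / 2) * gradsq Qf x + lam ^ 2 * Fbred A B C (Qf x))
          + (t * (gmix Qf hf x + lam ^ 2 *
              (A / C * (Qf x * hf x).trace - B / C * (Qf x * Qf x * hf x).trace
                + (Qf x * Qf x).trace * (Qf x * hf x).trace))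
          + (t ^ 2 * ((1 / 2) * gradsq hf x + lam ^ 2 *
              (A / (2 * C) * (hf x * hf x).trace - B / C * (Qf x * (hf x * hf x)).trace
                + (Qf x * hf x).trace ^ 2
                + (Qf x * Qf x).trace * (hf x * hf x).trace / 2))
          + (t ^ 3 * (lam ^ 2 * (-(B / (3 * C)) * (hf x * hf x * hf x).trace
                + (Qf x * hf x).trace * (hf x * hf x).trace))
          + t ^ 4 * (lam ^ 2 * ((1 / 4) * (hf x * hf x).trace ^ 2))))) := by
    intro x
    rw [gradsq_expand Qf hf hQ hh t x, Fbred_expand]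
    ring
  have step1 : Eldg Ω lam A B C (fun x => Qf x + t • hf x)
      = ∫ x in Ω, (((1 / 2) * gradsq Qf x + lam ^ 2 * Fbred A B C (Qf x))
          + (t * (gmix Qf hf x + lam ^ 2 *
              (A / C * (Qf x * hf x).trace - B / C * (Qf x * Qf x * hf x).trace
                + (Qf x * Qf x).trace * (Qf x * hf x).trace))
          + (t ^ 2 * ((1 / 2) * gradsq hf x + lam ^ 2 *
              (A / (2 * C) * (hf x * hf x).trace - B / C * (Qf x * (hf x * hf x)).trace
                + (Qf x * hf x).trace ^ 2
                + (Qf x * Qf x).trace * (hf x * hf x).trace / 2))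
          + (t ^ 3 * (lam ^ 2 * (-(B / (3 * C)) * (hf x * hf x * hf x).trace
                + (Qf x * hf x).trace * (hf x * hf x).trace))
          + t ^ 4 * (lam ^ 2 * ((1 / 4) * (hf x * hf x).trace ^ 2)))))) := by
    unfold Eldg
    exact integral_congr_ae (Filter.Eventually.of_forall fun x => hpt x)
  have J1 : IntegrableOn (fun x => t * (gmix Qf hf x + lam ^ 2 *
      (A / C * (Qf x * hf x).trace - B / C * (Qf x * Qf x * hf x).trace
        + (Qf x * Qf x).trace * (Qf x * hf x).trace))) Ω volume := I1.const_mul t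
  have J2 : IntegrableOn (fun x => t ^ 2 * ((1 / 2) * gradsq hf x + lam ^ 2 *
      (A / (2 * C) * (hf x * hf x).trace - B / C * (Qf x * (hf x * hf x)).trace
        + (Qf x * hf x).trace ^ 2 + (Qf x * Qf x).trace * (hf x * hf x).trace / 2))) Ω volume := I2.const_mul _
  have J3 : IntegrableOn (fun x => t ^ 3 * (lam ^ 2 * (-(B / (3 * C)) * (hf x * hf x * hf x).trace
        + (Qf x * hf x).trace * (hf x * hf x).trace))) Ω volume := I3.const_mul _
  have J4 : IntegrableOn (fun x => t ^ 4 * (lam ^ 2 * ((1 / 4) * (hf x * hf x).trace ^ 2))) Ω volume := I4.const_mul _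
  have J34 : IntegrableOn (fun x => t ^ 3 * (lam ^ 2 * (-(B / (3 * C)) * (hf x * hf x * hf x).trace
        + (Qf x * hf x).trace * (hf x * hf x).trace)) + t ^ 4 * (lam ^ 2 * ((1 / 4) * (hf x * hf x).trace ^ 2))) Ω volume := J3.add J4
  have J234 : IntegrableOn (fun x => t ^ 2 * ((1 / 2) * gradsq hf x + lam ^ 2 *
      (A / (2 * C) * (hf x * hf x).trace - B / C * (Qf x * (hf x * hf x)).trace
        + (Qf x * hf x).trace ^ 2 + (Qf x * Qf x).trace * (hf x * hf x).trace / 2)) + (t ^ 3 * (lam ^ 2 * (-(B / (3 * C)) * (hf x * hf x * hf x).trace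
        + (Qf x * hf x).trace * (hf x * hf x).trace)) + t ^ 4 * (lam ^ 2 * ((1 / 4) * (hf x * hf x).trace ^ 2)))) Ω volume :=
    J2.add J34
  have J1234 : IntegrableOn (fun x => t * (gmix Qf hf x + lam ^ 2 *
      (A / C * (Qf x * hf x).trace - B / C * (Qf x * Qf x * hf x).trace
        + (Qf x * Qf x).trace * (Qf x * hf x).trace)) + (t ^ 2 * ((1 / 2) * gradsq hf x + lam ^ 2 *
      (A / (2 * C) * (hf x * hf x).trace - B / C * (Qf x * (hf x * hf x)).trace
        + (Qf x * hf x).trace ^ 2 + (Qf x * Qf x).trace * (hf x * hf x).trace / 2)) + (t ^ 3 * (lam ^ 2 * (-(B / (3 * C)) * (hf x * hf x * hf x).trace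
        + (Qf x * hf x).trace * (hf x * hf x).trace)) + t ^ 4 * (lam ^ 2 * ((1 / 4) * (hf x * hf x).trace ^ 2))))) Ω volume :=
    J1.add J234
  have K1 : (∫ x in Ω, t * (gmix Qf hf x + lam ^ 2 *
      (A / C * (Qf x * hf x).trace - B / C * (Qf x * Qf x * hf x).trace
        + (Qf x * Qf x).trace * (Qf x * hf x).trace))) = t * ∫ x in Ω, (gmix Qf hf x + lam ^ 2 *
      (A / C * (Qf x * hf x).trace - B / C * (Qf x * Qf x * hf x).trace
        + (Qf x * Qf x).trace * (Qf x * hf x).trace)) := integral_const_mul t _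
  have K2 : (∫ x in Ω, t ^ 2 * ((1 / 2) * gradsq hf x + lam ^ 2 *
      (A / (2 * C) * (hf x * hf x).trace - B / C * (Qf x * (hf x * hf x)).trace
        + (Qf x * hf x).trace ^ 2 + (Qf x * Qf x).trace * (hf x * hf x).trace / 2))) = t ^ 2 * ∫ x in Ω, ((1 / 2) * gradsq hf x + lam ^ 2 *
      (A / (2 * C) * (hf x * hf x).trace - B / C * (Qf x * (hf x * hf x)).trace
        + (Qf x * hf x).trace ^ 2 + (Qf x * Qf x).trace * (hf x * hf x).trace / 2)) := integral_const_mul _ _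
  have K3 : (∫ x in Ω, t ^ 3 * (lam ^ 2 * (-(B / (3 * C)) * (hf x * hf x * hf x).trace
        + (Qf x * hf x).trace * (hf x * hf x).trace))) = t ^ 3 * ∫ x in Ω, (lam ^ 2 * (-(B / (3 * C)) * (hf x * hf x * hf x).trace
        + (Qf x * hf x).trace * (hf x * hf x).trace)) := integral_const_mul _ _
  have K4 : (∫ x in Ω, t ^ 4 * (lam ^ 2 * ((1 / 4) * (hf x * hf x).trace ^ 2))) = t ^ 4 * ∫ x in Ω, (lam ^ 2 * ((1 / 4) * (hf x * hf x).trace ^ 2)) := integral_const_mul _ _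
  rw [step1, integral_add I0 J1234, integral_add J1 J234, integral_add J2 J34,
    integral_add J3 J4, K1, K2, K3, K4]
  show _ = _ + _ + _ + _ + _
  unfold Eldg
  ring

lemma matrix_eq_zero_of_trace_sq (a : Matrix (Fin 3) (Fin 3) ℝ) (ha : a.IsSymm)
    (h0 : (a * a).trace = 0) : a = 0 := by
  have hs := trace_sq_eq_sum a ha
  rw [h0] at hs
  ext i j
  have h1 := (Finset.sum_eq_zero_iff_of_nonneg
    (fun i _ => Finset.sum_nonneg fun j _ => sq_nonneg (a i j))).mp hs.symm
  have h2 := (Finset.sum_eq_zero_iff_of_nonneg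
    (fun j _ => sq_nonneg (a i j))).mp (h1 i (Finset.mem_univ i))
  have h3 := h2 j (Finset.mem_univ j)
  have : a i j = 0 := by
    have := sq_eq_zero_iff.mp h3
    exact this
  simpa using this

lemma poly_hasDerivAt (e0 e1 e2 e3 e4 t : ℝ) :
    HasDerivAt (fun s : ℝ => e0 + s * e1 + s ^ 2 * e2 + s ^ 3 * e3 + s ^ 4 * e4)
      (e1 + 2 * t * e2 + 3 * t ^ 2 * e3 + 4 * t ^ 3 * e4) t := by
  have h0 : HasDerivAt (fun _ : ℝ => e0) 0 t := hasDerivAt_const t e0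
  have h1 : HasDerivAt (fun s : ℝ => s * e1) e1 t := by
    simpa using (hasDerivAt_id t).mul_const e1
  have h2 : HasDerivAt (fun s : ℝ => s ^ 2 * e2) (2 * t * e2) t := by
    have := (hasDerivAt_pow 2 t).mul_const e2
    norm_num at this
    convert this using 1
  have h3 : HasDerivAt (fun s : ℝ => s ^ 3 * e3) (3 * t ^ 2 * e3) t := by
    have := (hasDerivAt_pow 3 t).mul_const e3
    norm_num at this
    convert this using 1
  have h4 : HasDerivAt (fun s : ℝ => s ^ 4 * e4) (4 * t ^ 3 * e4) t := by
    have := (hasDerivAt_pow 4 t).mul_const e4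
    norm_num at this
    convert this using 1
  have : HasDerivAt (fun s : ℝ => e0 + s * e1 + s ^ 2 * e2 + s ^ 3 * e3 + s ^ 4 * e4)
      (0 + e1 + 2 * t * e2 + 3 * t ^ 2 * e3 + 4 * t ^ 3 * e4) t := (((h0.add h1).add h2).add h3).add h4
  convert this using 1
  ring

/-- If `λ²(|A|/C + 2BM/C) < 1/C_P(Ω)` (Poincaré constant), then `E` is strictly convex
on `X = {Q : ‖Q‖_{L∞} ≤ M}` within an H₀¹-type admissible class `𝒜`, and consequently
`E` has at most one critical point in `X ∩ 𝒜`. -/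
theorem stmt7 (Ω : Set (Fin 3 → ℝ)) (hΩm : MeasurableSet Ω)
    (hΩb : Bornology.IsBounded Ω)
    (A B C lam M C_P : ℝ) (hC : 0 < C) (hB : 0 < B) (hlam : 0 < lam) (hM : 0 < M)
    (hCP : 0 < C_P)
    (𝒜 : Set ((Fin 3 → ℝ) → Matrix (Fin 3) (Fin 3) ℝ))
    (h𝒜reg : ∀ f ∈ 𝒜, (∀ i j, ContDiff ℝ 1 fun y => f y i j) ∧
      ∀ x, (f x).IsSymm ∧ (f x).trace = 0)
    (h𝒜sub : ∀ f ∈ 𝒜, ∀ g ∈ 𝒜, (f - g) ∈ 𝒜)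
    (h𝒜add : ∀ f ∈ 𝒜, ∀ g ∈ 𝒜, (f + g) ∈ 𝒜)
    (h𝒜smul : ∀ (c : ℝ), ∀ f ∈ 𝒜, (c • f) ∈ 𝒜)
    (hPoin : ∀ f ∈ 𝒜, ∫ x in Ω, (f x * f x).trace ≤ C_P * ∫ x in Ω, gradsq f x)
    (hsmall : lam ^ 2 * (|A| / C + 2 * B * M / C) < 1 / C_P) :
    (∀ Qf ∈ 𝒜, ∀ hf ∈ 𝒜,
        (∀ x ∈ Ω, Real.sqrt ((Qf x * Qf x).trace) ≤ M) →
        (∀ x ∈ Ω, Real.sqrt (((Qf x + hf x) * (Qf x + hf x)).trace) ≤ M) →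
        (∀ x ∈ Ω, Real.sqrt (((Qf x - hf x) * (Qf x - hf x)).trace) ≤ M) →
        ¬ (∀ᵐ x ∂(volume.restrict Ω), hf x = 0) →
        2 * Eldg Ω lam A B C Qf
          < Eldg Ω lam A B C (fun x => Qf x + hf x)
              + Eldg Ω lam A B C (fun x => Qf x - hf x)) ∧
    (∀ Q₁ ∈ 𝒜, ∀ Q₂ ∈ 𝒜,
        (∀ x ∈ Ω, Real.sqrt ((Q₁ x * Q₁ x).trace) ≤ M) →
        (∀ x ∈ Ω, Real.sqrt ((Q₂ x * Q₂ x).trace) ≤ M) →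
        IsCritical 𝒜 Ω lam A B C Q₁ → IsCritical 𝒜 Ω lam A B C Q₂ →
        ∀ᵐ x ∂(volume.restrict Ω), Q₁ x = Q₂ x) := by
  have hsm1 : lam ^ 2 * (|A| / C + 2 * B * M / C) * C_P < 1 := (lt_div_iff₀ hCP).mp hsmall
  have hαnn : 0 ≤ |A| / C + 2 * B * M / C := by positivity
  have hconv : ∀ Qf ∈ 𝒜, ∀ hf ∈ 𝒜,
      (∀ x ∈ Ω, Real.sqrt ((Qf x * Qf x).trace) ≤ M) →
      (∀ x ∈ Ω, Real.sqrt (((Qf x + hf x) * (Qf x + hf x)).trace) ≤ M) →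
      (∀ x ∈ Ω, Real.sqrt (((Qf x - hf x) * (Qf x - hf x)).trace) ≤ M) →
      ¬ (∀ᵐ x ∂(volume.restrict Ω), hf x = 0) →
      2 * Eldg Ω lam A B C Qf
        < Eldg Ω lam A B C (fun x => Qf x + hf x)
            + Eldg Ω lam A B C (fun x => Qf x - hf x) := by
    intro Qf hQ𝒜 hf hh𝒜 hb0 _ _ hne
    obtain ⟨hQreg, hQsp⟩ := h𝒜reg Qf hQ𝒜
    obtain ⟨hhreg, hhsp⟩ := h𝒜reg hf hh𝒜
    obtain ⟨e1, e3, hE⟩ := Eldg_expand Ω hΩm hΩb lam A B C Qf hf hQreg hhreg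
    have hplus : Eldg Ω lam A B C (fun x => Qf x + hf x)
        = Eldg Ω lam A B C (fun x => Qf x + (1 : ℝ) • hf x) := by
      congr 1; funext x; rw [one_smul]
    have hminus : Eldg Ω lam A B C (fun x => Qf x - hf x)
        = Eldg Ω lam A B C (fun x => Qf x + (-1 : ℝ) • hf x) := by
      congr 1; funext x; rw [neg_one_smul, ← sub_eq_add_neg]
    rw [hplus, hminus, hE 1, hE (-1)]
    -- continuity and integrability facts
    have cQ : ∀ i j, Continuous fun x => Qf x i j := fun i j => (hQreg i j).continuous
    have ch : ∀ i j, Continuous fun x => hf x i j := fun i j => (hhreg i j).continuous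
    have cQQ : Continuous fun x => (Qf x * Qf x).trace := cont_trace_mul Qf Qf cQ cQ
    have cQh : Continuous fun x => (Qf x * hf x).trace := cont_trace_mul Qf hf cQ ch
    have chh : Continuous fun x => (hf x * hf x).trace := cont_trace_mul hf hf ch ch
    have cQhh : Continuous fun x => (Qf x * (hf x * hf x)).trace :=
      cont_trace_mul Qf (fun x => hf x * hf x) cQ (cont_entry_mul hf hf ch ch)
    have I2 : IntegrableOn (fun x => ((1 / 2) * gradsq hf x + lam ^ 2 *
              (A / (2 * C) * (hf x * hf x).trace - B / C * (Qf x * (hf x * hf x)).trace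
                + (Qf x * hf x).trace ^ 2
                + (Qf x * Qf x).trace * (hf x * hf x).trace / 2))) Ω volume := integ_cont Ω hΩb _
      ((continuous_const.mul (cont_gradsq hf hhreg)).add (continuous_const.mul
        ((((continuous_const.mul chh).sub (continuous_const.mul cQhh)).add
          (cQh.pow 2)).add ((cQQ.mul chh).div_const 2))))
    have I4 : IntegrableOn (fun x => lam ^ 2 * ((1 / 4) * (hf x * hf x).trace ^ 2)) Ω volume := integ_cont Ω hΩb _
      (continuous_const.mul (continuous_const.mul (chh.pow 2)))
    have Isum : IntegrableOn (fun x => ((1 / 2) * gradsq hf x + lam ^ 2 *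
              (A / (2 * C) * (hf x * hf x).trace - B / C * (Qf x * (hf x * hf x)).trace
                + (Qf x * hf x).trace ^ 2
                + (Qf x * Qf x).trace * (hf x * hf x).trace / 2)) + lam ^ 2 * ((1 / 4) * (hf x * hf x).trace ^ 2)) Ω volume := I2.add I4
    have Ilow : IntegrableOn (fun x => ((1 / 2) * gradsq hf x - (lam ^ 2 * ((|A| / C + 2 * B * M / C) / 2)) * (hf x * hf x).trace)) Ω volume := integ_cont Ω hΩb _
      ((continuous_const.mul (cont_gradsq hf hhreg)).sub (continuous_const.mul chh))
    have Ig : IntegrableOn (fun x => gradsq hf x) Ω volume :=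
      integ_cont Ω hΩb _ (cont_gradsq hf hhreg)
    have Ir : IntegrableOn (fun x => (hf x * hf x).trace) Ω volume := integ_cont Ω hΩb _ chh
    -- positivity of the gradient term
    have hGnn : 0 ≤ ∫ x in Ω, gradsq hf x := setIntegral_nonneg hΩm fun x _ => by
      unfold gradsq; positivity
    have hG0 : 0 < ∫ x in Ω, gradsq hf x := by
      rcases hGnn.lt_or_eq with hlt | heq
      · exact hlt
      · exfalso
        have hRnn : ∀ x, 0 ≤ (hf x * hf x).trace := fun x => trace_sq_nonneg _ (hhsp x).1
        have hRle : ∫ x in Ω, (hf x * hf x).trace ≤ 0 := by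
          have hP := hPoin hf hh𝒜
          rw [← heq] at hP
          simpa using hP
        have hR0 : ∫ x in Ω, (hf x * hf x).trace = 0 :=
          le_antisymm hRle (setIntegral_nonneg hΩm fun x _ => hRnn x)
        have hae := (integral_eq_zero_iff_of_nonneg (fun x => hRnn x) Ir).mp hR0
        apply hne
        filter_upwards [hae] with x hx
        exact matrix_eq_zero_of_trace_sq (hf x) (hhsp x).1 hx
    -- the key lower bound
    have hptw : ∀ x ∈ Ω, ((1 / 2) * gradsq hf x - (lam ^ 2 * ((|A| / C + 2 * B * M / C) / 2)) * (hf x * hf x).trace) ≤ ((1 / 2) * gradsq hf x + lam ^ 2 *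
              (A / (2 * C) * (hf x * hf x).trace - B / C * (Qf x * (hf x * hf x)).trace
                + (Qf x * hf x).trace ^ 2
                + (Qf x * Qf x).trace * (hf x * hf x).trace / 2)) + lam ^ 2 * ((1 / 4) * (hf x * hf x).trace ^ 2) := by
      intro x hx
      have hd := deltaF_lb A B C M hC hB hM (Qf x) (hf x) (hQsp x).1 (hhsp x).1 (hb0 x hx)
      have hmul := mul_le_mul_of_nonneg_left hd (sq_nonneg lam)
      nlinarith [hmul]
    have hmono := setIntegral_mono_on Ilow Isum hΩm hptw
    have hsplit : (∫ x in Ω, ((1 / 2) * gradsq hf x - (lam ^ 2 * ((|A| / C + 2 * B * M / C) / 2)) * (hf x * hf x).trace))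
        = (1 / 2) * (∫ x in Ω, gradsq hf x)
          - (lam ^ 2 * ((|A| / C + 2 * B * M / C) / 2)) * ∫ x in Ω, (hf x * hf x).trace := by
      rw [integral_sub ((Ig.const_mul _)) (Ir.const_mul _), integral_const_mul,
        integral_const_mul]
    have hsum : (∫ x in Ω, (((1 / 2) * gradsq hf x + lam ^ 2 *
              (A / (2 * C) * (hf x * hf x).trace - B / C * (Qf x * (hf x * hf x)).trace
                + (Qf x * hf x).trace ^ 2
                + (Qf x * Qf x).trace * (hf x * hf x).trace / 2)) + lam ^ 2 * ((1 / 4) * (hf x * hf x).trace ^ 2)))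
        = (∫ x in Ω, ((1 / 2) * gradsq hf x + lam ^ 2 *
              (A / (2 * C) * (hf x * hf x).trace - B / C * (Qf x * (hf x * hf x)).trace
                + (Qf x * hf x).trace ^ 2
                + (Qf x * Qf x).trace * (hf x * hf x).trace / 2))) + ∫ x in Ω, lam ^ 2 * ((1 / 4) * (hf x * hf x).trace ^ 2) := integral_add I2 I4
    have hPo := hPoin hf hh𝒜
    have hc2 : (0:ℝ) ≤ lam ^ 2 * ((|A| / C + 2 * B * M / C) / 2) := by positivity
    have hkey : 0 < (1 - lam ^ 2 * (|A| / C + 2 * B * M / C) * C_P) * ∫ x in Ω, gradsq hf x :=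
      mul_pos (by linarith) hG0
    have hmul2 := mul_le_mul_of_nonneg_left hPo hc2
    have main : 0 < (∫ x in Ω, ((1 / 2) * gradsq hf x + lam ^ 2 *
              (A / (2 * C) * (hf x * hf x).trace - B / C * (Qf x * (hf x * hf x)).trace
                + (Qf x * hf x).trace ^ 2
                + (Qf x * Qf x).trace * (hf x * hf x).trace / 2))) + ∫ x in Ω, lam ^ 2 * ((1 / 4) * (hf x * hf x).trace ^ 2) := by
      rw [← hsum]
      refine lt_of_lt_of_le ?_ hmono
      rw [hsplit]
      nlinarith [hkey, hmul2]
    norm_num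
    linarith [main]
  refine ⟨hconv, ?_⟩
  intro Q₁ hQ₁𝒜 Q₂ hQ₂𝒜 hb1 hb2 hcr1 hcr2
  by_contra hne
  have hh𝒜 : (Q₂ - Q₁) ∈ 𝒜 := h𝒜sub Q₂ hQ₂𝒜 Q₁ hQ₁𝒜
  obtain ⟨hQ1reg, hQ1sp⟩ := h𝒜reg Q₁ hQ₁𝒜
  obtain ⟨hQ2reg, hQ2sp⟩ := h𝒜reg Q₂ hQ₂𝒜
  obtain ⟨hhreg, hhsp⟩ := h𝒜reg (Q₂ - Q₁) hh𝒜
  obtain ⟨e1, e3, hE⟩ := Eldg_expand Ω hΩm hΩb lam A B C Q₁ (Q₂ - Q₁) hQ1reg hhreg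
  set Qf := Q₁ with hQfdef
  set hf := Q₂ - Q₁ with hfdef
  set E0 := Eldg Ω lam A B C Q₁ with hE0def
  set e2 := ∫ x in Ω, ((1 / 2) * gradsq hf x + lam ^ 2 *
              (A / (2 * C) * (hf x * hf x).trace - B / C * (Qf x * (hf x * hf x)).trace
                + (Qf x * hf x).trace ^ 2
                + (Qf x * Qf x).trace * (hf x * hf x).trace / 2)) with he2def
  set e4 := ∫ x in Ω, lam ^ 2 * ((1 / 4) * (hf x * hf x).trace ^ 2) with he4def
  -- criticality at Q₁
  have hder1 := hcr1 hf hh𝒜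
  have hfun1 : (fun t : ℝ => Eldg Ω lam A B C (fun x => Q₁ x + t • hf x))
      = fun t : ℝ => E0 + t * e1 + t ^ 2 * e2 + t ^ 3 * e3 + t ^ 4 * e4 :=
    funext fun t => hE t
  rw [hfun1] at hder1
  have heq1 : e1 + 2 * 0 * e2 + 3 * 0 ^ 2 * e3 + 4 * 0 ^ 3 * e4 = 0 :=
    (poly_hasDerivAt E0 e1 e2 e3 e4 0).unique hder1
  have he1 : e1 = 0 := by linarith [heq1]
  -- criticality at Q₂
  have hder2 := hcr2 hf hh𝒜
  have hfun2 : (fun s : ℝ => Eldg Ω lam A B C (fun x => Q₂ x + s • hf x))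
      = fun s : ℝ => E0 + (1 + s) * e1 + (1 + s) ^ 2 * e2 + (1 + s) ^ 3 * e3
          + (1 + s) ^ 4 * e4 := by
    funext s
    have hpt : (fun x => Q₂ x + s • hf x) = fun x => Q₁ x + (1 + s) • hf x := by
      funext x
      simp only [hfdef, Pi.sub_apply]
      module
    rw [hpt, hE (1 + s)]
  rw [hfun2] at hder2
  have hpoly1 : HasDerivAt (fun s : ℝ => E0 + (1 + s) * e1 + (1 + s) ^ 2 * e2
      + (1 + s) ^ 3 * e3 + (1 + s) ^ 4 * e4)
      ((e1 + 2 * 1 * e2 + 3 * 1 ^ 2 * e3 + 4 * 1 ^ 3 * e4) * 1) 0 := by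
    have houter : HasDerivAt (fun t : ℝ => E0 + t * e1 + t ^ 2 * e2 + t ^ 3 * e3 + t ^ 4 * e4)
        (e1 + 2 * 1 * e2 + 3 * 1 ^ 2 * e3 + 4 * 1 ^ 3 * e4) ((fun s : ℝ => 1 + s) 0) := by
      simpa using poly_hasDerivAt E0 e1 e2 e3 e4 1
    have hinner : HasDerivAt (fun s : ℝ => 1 + s) 1 0 := by
      simpa using (hasDerivAt_id (0 : ℝ)).const_add (1 : ℝ)
    have := houter.comp 0 hinner
    simpa [Function.comp_def] using this
  have heq2 : (e1 + 2 * 1 * e2 + 3 * 1 ^ 2 * e3 + 4 * 1 ^ 3 * e4) * 1 = 0 :=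
    hpoly1.unique hder2
  -- e4 is nonnegative
  have he4 : 0 ≤ e4 := by
    rw [he4def]
    exact setIntegral_nonneg hΩm fun x _ => by positivity
  -- strict convexity at the midpoint
  have hh2𝒜 : ((1 / 2 : ℝ) • hf) ∈ 𝒜 := h𝒜smul _ hf hh𝒜
  have hQm𝒜 : (Q₁ + (1 / 2 : ℝ) • hf) ∈ 𝒜 := h𝒜add Q₁ hQ₁𝒜 _ hh2𝒜
  have hQmpt : ∀ x, (Q₁ + (1 / 2 : ℝ) • hf) x = (1 / 2 : ℝ) • (Q₁ x + Q₂ x) := by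
    intro x
    simp only [Pi.add_apply, Pi.smul_apply, hfdef, Pi.sub_apply]
    module
  have hbmid : ∀ x ∈ Ω,
      Real.sqrt ((((Q₁ + (1 / 2 : ℝ) • hf) x) * ((Q₁ + (1 / 2 : ℝ) • hf) x)).trace) ≤ M := by
    intro x hx
    rw [hQmpt x]
    exact midpoint_bound (Q₁ x) (Q₂ x) (hQ1sp x).1 (hQ2sp x).1 M hM.le (hb1 x hx) (hb2 x hx)
  have hplus_eq : ∀ x, (Q₁ + (1 / 2 : ℝ) • hf) x + ((1 / 2 : ℝ) • hf) x = Q₂ x := by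
    intro x
    simp only [Pi.add_apply, Pi.smul_apply, hfdef, Pi.sub_apply]
    module
  have hminus_eq : ∀ x, (Q₁ + (1 / 2 : ℝ) • hf) x - ((1 / 2 : ℝ) • hf) x = Q₁ x := by
    intro x
    simp only [Pi.add_apply, Pi.smul_apply, hfdef, Pi.sub_apply]
    module
  have hbp : ∀ x ∈ Ω, Real.sqrt ((((Q₁ + (1 / 2 : ℝ) • hf) x + ((1 / 2 : ℝ) • hf) x)
      * ((Q₁ + (1 / 2 : ℝ) • hf) x + ((1 / 2 : ℝ) • hf) x)).trace) ≤ M := by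
    intro x hx
    rw [hplus_eq x]
    exact hb2 x hx
  have hbm : ∀ x ∈ Ω, Real.sqrt ((((Q₁ + (1 / 2 : ℝ) • hf) x - ((1 / 2 : ℝ) • hf) x)
      * ((Q₁ + (1 / 2 : ℝ) • hf) x - ((1 / 2 : ℝ) • hf) x)).trace) ≤ M := by
    intro x hx
    rw [hminus_eq x]
    exact hb1 x hx
  have hne2 : ¬ (∀ᵐ x ∂(volume.restrict Ω), ((1 / 2 : ℝ) • hf) x = 0) := by
    intro hcon
    apply hne
    filter_upwards [hcon] with x hx
    have hx2 : (1 / 2 : ℝ) • hf x = 0 := hx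
    have hhx : hf x = 0 := by
      rcases smul_eq_zero.mp hx2 with hc | hc
      · norm_num at hc
      · exact hc
    have : Q₂ x - Q₁ x = 0 := by
      have := hhx
      simpa [hfdef, Pi.sub_apply] using this
    have := sub_eq_zero.mp this
    exact this.symm
  have hstrict := hconv (Q₁ + (1 / 2 : ℝ) • hf) hQm𝒜 ((1 / 2 : ℝ) • hf) hh2𝒜
    hbmid hbp hbm hne2
  -- rewrite the three energies via the expansion
  have hEm : Eldg Ω lam A B C (Q₁ + (1 / 2 : ℝ) • hf)
      = E0 + (1 / 2 : ℝ) * e1 + (1 / 2 : ℝ) ^ 2 * e2 + (1 / 2 : ℝ) ^ 3 * e3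
        + (1 / 2 : ℝ) ^ 4 * e4 := by
    have hfn : (Q₁ + (1 / 2 : ℝ) • hf) = fun x => Q₁ x + (1 / 2 : ℝ) • hf x := rfl
    rw [hfn, hE (1 / 2 : ℝ)]
  have hEp : Eldg Ω lam A B C (fun x => (Q₁ + (1 / 2 : ℝ) • hf) x + ((1 / 2 : ℝ) • hf) x)
      = E0 + (1 : ℝ) * e1 + (1 : ℝ) ^ 2 * e2 + (1 : ℝ) ^ 3 * e3 + (1 : ℝ) ^ 4 * e4 := by
    have hfn : (fun x => (Q₁ + (1 / 2 : ℝ) • hf) x + ((1 / 2 : ℝ) • hf) x)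
        = fun x => Q₁ x + (1 : ℝ) • hf x := by
      funext x
      rw [hplus_eq x]
      simp only [hfdef, Pi.sub_apply, one_smul]
      module
    rw [hfn, hE (1 : ℝ)]
  have hEmn : Eldg Ω lam A B C (fun x => (Q₁ + (1 / 2 : ℝ) • hf) x - ((1 / 2 : ℝ) • hf) x)
      = E0 := by
    have hfn : (fun x => (Q₁ + (1 / 2 : ℝ) • hf) x - ((1 / 2 : ℝ) • hf) x) = Q₁ :=
      funext fun x => hminus_eq x
    rw [hfn]
  rw [hEm, hEp, hEmn] at hstrict
  norm_num at hstrict heq2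
  linarith [hstrict, heq2, he1, he4]
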